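/- For every complex number α ≠ −1 and every natural n, ∑_{j=0}^{n} (−1)^j · C(α, j) · C(α−1−j, n−j) / (j+1) = (C(α, n+1) + (−1)^n) / (α + 1), where C(x, k) = x(x−1)⋯(x−k+1)/k! denotes the generalized binomial coefficient. -/

import Mathlib

/-- Generalized binomial coefficient `C(x, k) = x(x−1)⋯(x−k+1)/k!`. -/
noncomputable def genBinom (x : ℂ) (k : ℕ) : ℂ :=
  (∏ i ∈ Finset.range k, (x - (i : ℂ))) / (k.factorial : ℂ)

lemma descPoch_prod (x : ℂ) (k : ℕ) :
    (descPochhammer ℤ k).smeval x = ∏ i ∈ Finset.range k, (x - (i : ℂ)) := by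
  induction k with
  | zero => simp [descPochhammer]
  | succ k ih =>
    rw [descPochhammer_succ_right, Polynomial.smeval_mul, ih, Finset.prod_range_succ]
    congr 1
    simp [Polynomial.smeval_sub, Polynomial.smeval_X, Polynomial.smeval_natCast]

lemma genBinom_eq_choose (x : ℂ) (k : ℕ) : genBinom x k = Ring.choose x k := by
  have h := Ring.descPochhammer_eq_factorial_smul_choose x k
  rw [descPoch_prod] at h
  have hk : (k.factorial : ℂ) ≠ 0 := Nat.cast_ne_zero.mpr k.factorial_ne_zero
  rw [genBinom, h, nsmul_eq_mul]
  field_simp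

lemma prod_neg_range (f : ℕ → ℂ) (k : ℕ) :
    ∏ i ∈ Finset.range k, -(f i) = (-1:ℂ)^k * ∏ i ∈ Finset.range k, f i := by
  induction k with
  | zero => simp
  | succ k ih => rw [Finset.prod_range_succ, Finset.prod_range_succ, ih]; ring

lemma genBinom_neg (x : ℂ) (k : ℕ) :
    genBinom ((k : ℂ) - 1 - x) k = (-1 : ℂ) ^ k * genBinom x k := by
  rw [genBinom, genBinom, ← mul_div_assoc]
  congr 1
  have : ∀ i ∈ Finset.range k, ((k : ℂ) - 1 - x - (i : ℂ)) = -(x - ((k - 1 - i : ℕ) : ℂ)) := by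
    intro i hi
    have hik : i < k := Finset.mem_range.mp hi
    have : ((k - 1 - i : ℕ) : ℂ) = (k : ℂ) - 1 - (i : ℂ) := by
      have h1 : (1:ℕ) + i ≤ k := by omega
      push_cast [Nat.sub_sub, Nat.cast_sub h1]
      ring
    rw [this]; ring
  rw [Finset.prod_congr rfl this]
  rw [prod_neg_range (fun i => x - ((k - 1 - i : ℕ) : ℂ)) k]
  rw [Finset.prod_range_reflect (fun i => x - (i:ℂ)) k]

lemma genBinom_absorb (α : ℂ) (j : ℕ) :
    (α + 1) * genBinom α j = ((j : ℂ) + 1) * genBinom (α + 1) (j + 1) := by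
  rw [genBinom, genBinom, Finset.prod_range_succ' (fun i => α + 1 - (i : ℂ)) j]
  have h1 : ∀ i ∈ Finset.range j, (α + 1 - ((i + 1 : ℕ) : ℂ)) = α - i := by
    intro i _; push_cast; ring
  rw [Finset.prod_congr rfl h1]
  have h2 : ((j + 1).factorial : ℂ) = ((j : ℂ) + 1) * (j.factorial : ℂ) := by
    rw [Nat.factorial_succ]; push_cast; ring
  rw [h2]
  have hj : (j.factorial : ℂ) ≠ 0 := Nat.cast_ne_zero.mpr j.factorial_ne_zero
  have hj1 : ((j : ℂ) + 1) ≠ 0 := Nat.cast_add_one_ne_zero j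
  field_simp
  ring

lemma genBinom_self (k : ℕ) : genBinom ((k : ℕ) : ℂ) k = 1 := by
  rw [genBinom_eq_choose, Ring.choose_natCast, Nat.choose_self, Nat.cast_one]

/-- For `α ≠ −1`,
`∑_{j=0}^{n} (−1)ʲ C(α, j) C(α−1−j, n−j)/(j+1) = (C(α, n+1) + (−1)ⁿ)/(α+1)`. -/
theorem binomial_sum_identity (α : ℂ) (hα : α ≠ -1) (n : ℕ) :
    ∑ j ∈ Finset.range (n + 1),
        (-1 : ℂ) ^ j * genBinom α j * genBinom (α - 1 - (j : ℂ)) (n - j) / ((j : ℂ) + 1) =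
      (genBinom α (n + 1) + (-1 : ℂ) ^ n) / (α + 1) := by
  have hα1 : α + 1 ≠ 0 := fun h => hα (by linear_combination h)
  have hterm : ∀ j ∈ Finset.range (n + 1),
      (-1 : ℂ) ^ j * genBinom α j * genBinom (α - 1 - (j : ℂ)) (n - j) / ((j : ℂ) + 1)
      = ((-1 : ℂ) ^ n / (α + 1)) *
        (genBinom (α + 1) (j + 1) * genBinom ((n : ℂ) - α) (n - j)) := by
    intro j hj
    have hjn : j ≤ n := Nat.lt_succ_iff.mp (Finset.mem_range.mp hj)
    have hcast : ((n - j : ℕ) : ℂ) = (n : ℂ) - j := by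
      push_cast [Nat.cast_sub hjn]; ring
    have hx : α - 1 - (j : ℂ) = ((n - j : ℕ) : ℂ) - 1 - ((n : ℂ) - α) := by
      rw [hcast]; ring
    rw [hx, genBinom_neg ((n : ℂ) - α) (n - j)]
    have hj1 : ((j : ℂ) + 1) ≠ 0 := Nat.cast_add_one_ne_zero j
    have habs := genBinom_absorb α j
    have hg : genBinom α j = ((j : ℂ) + 1) * genBinom (α + 1) (j + 1) / (α + 1) := by
      field_simp
      linear_combination habs
    rw [hg]
    have hsign : (-1 : ℂ) ^ j * (-1 : ℂ) ^ (n - j) = (-1 : ℂ) ^ n := by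
      rw [← pow_add]; congr 1; omega
    field_simp
    linear_combination (genBinom (α + 1) (j + 1) * genBinom ((n : ℂ) - α) (n - j)) * hsign
  rw [Finset.sum_congr rfl hterm, ← Finset.mul_sum]
  have hvd := Ring.add_choose_eq (R := ℂ) (r := α + 1) (s := (n : ℂ) - α) (n + 1)
    (Commute.all _ _)
  rw [Finset.Nat.sum_antidiagonal_eq_sum_range_succ_mk] at hvd
  have hsum : α + 1 + ((n : ℂ) - α) = (((n + 1 : ℕ)) : ℂ) := by push_cast; ring
  rw [hsum, Ring.choose_natCast, Nat.choose_self, Nat.cast_one] at hvd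
  rw [Finset.sum_range_succ' (fun k => Ring.choose (α + 1) k
    * Ring.choose ((n : ℂ) - α) (n + 1 - k)) (n + 1)] at hvd
  simp only [Nat.succ_sub_succ, Ring.choose_zero_right, one_mul, Nat.sub_zero] at hvd
  have hkey : ∑ j ∈ Finset.range (n + 1),
      genBinom (α + 1) (j + 1) * genBinom ((n : ℂ) - α) (n - j)
      = 1 - genBinom ((n : ℂ) - α) (n + 1) := by
    simp only [genBinom_eq_choose]
    linear_combination -hvd
  rw [hkey]
  have hneg : genBinom ((n : ℂ) - α) (n + 1) = (-1 : ℂ) ^ (n + 1) * genBinom α (n + 1) := by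
    have : (n : ℂ) - α = (((n + 1 : ℕ)) : ℂ) - 1 - α := by push_cast; ring
    rw [this, genBinom_neg]
  rw [hneg]
  have hone : (-1 : ℂ) ^ n * (-1 : ℂ) ^ n = 1 := by
    rw [← pow_add]; exact Even.neg_one_pow ⟨n, rfl⟩
  field_simp
  linear_combination genBinom α (n + 1) * hone
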